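/- Let a1, a4 be real with a1 ≠ 0. On the open region U = {(x,y) in R^2 : 1 + a1*x > 0}, the function γ(x,y) = (1+a1*x)^(-(a1+2*a4)/a1) is an integrating factor of the reversible system Q3^R given by dx/dt = y*(1+a1*x), dy/dt = -x + x^2 + a4*y^2; that is, ∂/∂x [γ(x,y)*y*(1+a1*x)] + ∂/∂y [γ(x,y)*(-x + x^2 + a4*y^2)] = 0 for all (x,y) in U. -/

import Mathlib

/-- On U = {1 + a1*x > 0}, γ(x,y) = (1+a1*x)^(-(a1+2a4)/a1) is an integrating
factor of the reversible system Q3^R: dx/dt = y*(1+a1*x),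
dy/dt = -x + x^2 + a4*y^2. -/
theorem stmt_1 (a1 a4 : ℝ) (ha1 : a1 ≠ 0)
    (γ : ℝ → ℝ) (hγ : ∀ x : ℝ, γ x = (1 + a1*x) ^ (-(a1 + 2*a4)/a1)) :
    ∀ x y : ℝ, 1 + a1*x > 0 →
      deriv (fun x' => γ x' * (y * (1 + a1*x'))) x
        + deriv (fun y' => γ x * (-x + x^2 + a4*y'^2)) y = 0 := by
  intro x y hx
  set p : ℝ := -(a1 + 2*a4)/a1 with hp
  have hne : (1 + a1*x) ≠ 0 := ne_of_gt hx
  have h1 : HasDerivAt (fun x' : ℝ => 1 + a1*x') a1 x := by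
    simpa using ((hasDerivAt_id x).const_mul a1).const_add 1
  have h2 : HasDerivAt (fun x' : ℝ => (1 + a1*x') ^ p)
      (a1 * p * (1+a1*x)^(p-1)) x := h1.rpow_const (Or.inl hne)
  have h3 : HasDerivAt (fun x' : ℝ => y * (1 + a1*x')) (y * a1) x := by
    simpa using h1.const_mul y
  have h4 : HasDerivAt (fun x' => γ x' * (y * (1 + a1*x')))
      (a1 * p * (1+a1*x)^(p-1) * (y * (1+a1*x)) + (1+a1*x)^p * (y * a1)) x := by
    have heq : (fun x' => γ x' * (y * (1 + a1*x')))
        = fun x' => (1 + a1*x')^p * (y * (1 + a1*x')) :=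
      funext fun z => by rw [hγ]
    rw [heq]
    exact h2.mul h3
  have h5 : HasDerivAt (fun y' : ℝ => γ x * (-x + x^2 + a4*y'^2))
      (γ x * (a4 * (2*y))) y := by
    have hy : HasDerivAt (fun y' : ℝ => -x + x^2 + a4*y'^2) (a4*(2*y)) y := by
      have := ((hasDerivAt_pow 2 y).const_mul a4).const_add (-x + x^2)
      simpa [mul_comm] using this
    exact hy.const_mul (γ x)
  rw [h4.deriv, h5.deriv, hγ]
  have hpow : (1+a1*x)^(p-1) * (1+a1*x) = (1+a1*x)^p := by
    rw [← Real.rpow_add_one hne]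
    ring_nf
  have hap : a1 * p = -(a1 + 2*a4) := by
    rw [hp]; field_simp
  calc a1 * p * (1+a1*x)^(p-1) * (y * (1+a1*x)) + (1+a1*x)^p * (y * a1)
        + (1+a1*x)^p * (a4 * (2*y))
      = a1 * p * ((1+a1*x)^(p-1) * (1+a1*x)) * y
        + (1+a1*x)^p * (y * a1) + (1+a1*x)^p * (a4 * (2*y)) := by ring
    _ = (a1 * p + a1 + 2*a4) * ((1+a1*x)^p * y) := by rw [hpow]; ring
    _ = 0 := by rw [hap]; ring
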